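/- arXiv:hep-th/9705024 — 9 statements merged into one kernel-verified Lean document; each statement's English description precedes it below -/
import Mathlib

section
/- Let E be a real normed vector space, p ∈ E, n ∈ ℕ, and let σ, P₁, …, Pₙ : E →L[ℝ] ℝ be continuous linear functionals. Let e₁, X, Z₁, …, Zₙ : E → ℝ be differentiable at p and satisfy the N=4 normal-frame differential relations at p: fderiv e₁ p = (Σᵢ Zᵢ(p) • Pᵢ) − e₁(p) • σ, fderiv X p = 2·X(p) • σ, and fderiv Zᵢ p = 2·e₁(p) • Pᵢ − Zᵢ(p) • σ for each i. Then the black-hole potential V = 2e₁² + 4X² + Σᵢ Zᵢ² satisfies fderiv V p = (−4·e₁(p)² + 16·X(p)² − 2·Σᵢ Zᵢ(p)²) • σ + Σᵢ (8·e₁(p)·Zᵢ(p)) • Pᵢ. -/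
/-- N=4, D=5 supergravity, normal frame: the derivative of the black-hole
potential `V = 2e₁² + 4X² + Σᵢ Zᵢ²` in terms of the vielbein functionals. -/
theorem n4_potential_derivative {E : Type*} [NormedAddCommGroup E] [NormedSpace ℝ E]
    (p : E) (n : ℕ) (σ : E →L[ℝ] ℝ) (P : Fin n → E →L[ℝ] ℝ)
    (e₁ X : E → ℝ) (Z : Fin n → E → ℝ)
    (he₁ : DifferentiableAt ℝ e₁ p) (hX : DifferentiableAt ℝ X p)
    (hZ : ∀ i, DifferentiableAt ℝ (Z i) p)
    (de₁ : fderiv ℝ e₁ p = (∑ i, Z i p • P i) - e₁ p • σ)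
    (dX : fderiv ℝ X p = (2 * X p) • σ)
    (dZ : ∀ i, fderiv ℝ (Z i) p = (2 * e₁ p) • P i - Z i p • σ) :
    fderiv ℝ (fun x => 2 * e₁ x ^ 2 + 4 * X x ^ 2 + ∑ i, Z i x ^ 2) p
      = (-4 * e₁ p ^ 2 + 16 * X p ^ 2 - 2 * ∑ i, Z i p ^ 2) • σ
        + ∑ i, (8 * e₁ p * Z i p) • P i := by
  have H : HasFDerivAt (fun x => 2 * e₁ x ^ 2 + 4 * X x ^ 2 + ∑ i, Z i x ^ 2)
      ((2:ℝ) • (e₁ p • fderiv ℝ e₁ p + e₁ p • fderiv ℝ e₁ p)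
        + (4:ℝ) • (X p • fderiv ℝ X p + X p • fderiv ℝ X p)
        + ∑ i, (Z i p • fderiv ℝ (Z i) p + Z i p • fderiv ℝ (Z i) p)) p := by
    have sq : ∀ (f : E → ℝ), DifferentiableAt ℝ f p →
        HasFDerivAt (fun x => f x ^ 2) (f p • fderiv ℝ f p + f p • fderiv ℝ f p) p := by
      intro f hf
      simpa [sq] using (hf.hasFDerivAt.fun_mul hf.hasFDerivAt)
    exact (((sq e₁ he₁).const_mul 2).add ((sq X hX).const_mul 4)).add
      (HasFDerivAt.fun_sum (fun i _ => sq (Z i) (hZ i)))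
  rw [H.fderiv, de₁, dX]
  simp only [dZ]
  ext v
  simp only [ContinuousLinearMap.add_apply, ContinuousLinearMap.smul_apply,
    ContinuousLinearMap.sum_apply, ContinuousLinearMap.sub_apply, smul_eq_mul]
  have h1 : ∑ i, (Z i p * ((2 * e₁ p) * P i v - Z i p * σ v)
      + Z i p * ((2 * e₁ p) * P i v - Z i p * σ v))
      = 4 * e₁ p * (∑ i, Z i p * P i v) - (∑ i, Z i p ^ 2) * (2 * σ v) := by
    rw [Finset.mul_sum, Finset.sum_mul, ← Finset.sum_sub_distrib]
    exact Finset.sum_congr rfl fun i _ => by ring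
  have h2 : ∑ i, (8 * e₁ p * Z i p) * P i v = 8 * e₁ p * ∑ i, Z i p * P i v := by
    rw [Finset.mul_sum]; exact Finset.sum_congr rfl fun i _ => by ring
  rw [h1, h2]
  ring
end

section
/- Let E be a real normed vector space, p ∈ E, and let σ, P₁, …, Pₙ : E →L[ℝ] ℝ be linearly independent continuous linear functionals. Let e₁, X, Z₁, …, Zₙ : E → ℝ be differentiable at p and satisfy at p: fderiv e₁ p = (Σᵢ Zᵢ(p) • Pᵢ) − e₁(p) • σ, fderiv X p = 2·X(p) • σ, fderiv Zᵢ p = 2·e₁(p) • Pᵢ − Zᵢ(p) • σ. Suppose p is a critical point of V = 2e₁² + 4X² + Σᵢ Zᵢ² (i.e. fderiv V p = 0) and e₁(p) ≠ 0. Then Zᵢ(p) = 0 for all i and e₁(p)² = 4·X(p)²; moreover, if e₁(p) = −2·X(p), then V(p) = 3·e₁(p)² = (4/3)·(e₁(p) − X(p))². -/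
set_option maxHeartbeats 1600000 in
/-- N=4, D=5 supergravity, normal frame: at a critical point of the black-hole
potential `V = 2e₁² + 4X² + Σᵢ Zᵢ²` with `e₁(p) ≠ 0`, the matter charges vanish,
`e₁² = 4X²`, and (if `e₁ = −2X`) `V = 3e₁² = (4/3)(e₁ − X)²`. -/
theorem n4_attractor {E : Type*} [NormedAddCommGroup E] [NormedSpace ℝ E]
    (p : E) (n : ℕ) (σ : E →L[ℝ] ℝ) (P : Fin n → E →L[ℝ] ℝ)
    (hindep : LinearIndependent ℝ (Fin.cons σ P : Fin (n + 1) → E →L[ℝ] ℝ))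
    (e₁ X : E → ℝ) (Z : Fin n → E → ℝ)
    (he₁ : DifferentiableAt ℝ e₁ p) (hX : DifferentiableAt ℝ X p)
    (hZ : ∀ i, DifferentiableAt ℝ (Z i) p)
    (de₁ : fderiv ℝ e₁ p = (∑ i, Z i p • P i) - e₁ p • σ)
    (dX : fderiv ℝ X p = (2 * X p) • σ)
    (dZ : ∀ i, fderiv ℝ (Z i) p = (2 * e₁ p) • P i - Z i p • σ)
    (hcrit : fderiv ℝ (fun x => 2 * e₁ x ^ 2 + 4 * X x ^ 2 + ∑ i, Z i x ^ 2) p = 0)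
    (hne : e₁ p ≠ 0) :
    (∀ i, Z i p = 0) ∧ e₁ p ^ 2 = 4 * X p ^ 2 ∧
      (e₁ p = -2 * X p →
        2 * e₁ p ^ 2 + 4 * X p ^ 2 + ∑ i, Z i p ^ 2 = 3 * e₁ p ^ 2 ∧
        3 * e₁ p ^ 2 = (4 / 3) * (e₁ p - X p) ^ 2) := by
  -- derivative of each square term
  have h1 : HasFDerivAt (fun x => 2 * e₁ x ^ 2) ((4 * e₁ p) • fderiv ℝ e₁ p) p := by
    have := (he₁.hasFDerivAt.mul he₁.hasFDerivAt).const_mul (2 : ℝ)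
    refine (this.congr_of_eventuallyEq (Filter.Eventually.of_forall fun x => ?_)).congr_fderiv ?_
    · simp only [Pi.mul_apply]; ring
    · ext v; simp; ring
  have h2 : HasFDerivAt (fun x => 4 * X x ^ 2) ((8 * X p) • fderiv ℝ X p) p := by
    have := (hX.hasFDerivAt.mul hX.hasFDerivAt).const_mul (4 : ℝ)
    refine (this.congr_of_eventuallyEq (Filter.Eventually.of_forall fun x => ?_)).congr_fderiv ?_
    · simp only [Pi.mul_apply]; ring
    · ext v; simp; ring
  have h3 : HasFDerivAt (fun x => ∑ i, Z i x ^ 2)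
      (∑ i, (2 * Z i p) • fderiv ℝ (Z i) p) p := by
    apply HasFDerivAt.fun_sum
    intro i _
    have := ((hZ i).hasFDerivAt.mul (hZ i).hasFDerivAt)
    convert this using 1
    · ext x; ring
    · ext x; simp only [Pi.mul_apply]; ring
    · rw [two_mul, add_smul]
  have hV : HasFDerivAt (fun x => 2 * e₁ x ^ 2 + 4 * X x ^ 2 + ∑ i, Z i x ^ 2)
      ((4 * e₁ p) • fderiv ℝ e₁ p + (8 * X p) • fderiv ℝ X p
        + ∑ i, (2 * Z i p) • fderiv ℝ (Z i) p) p := (h1.add h2).add h3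
  have hD : (4 * e₁ p) • fderiv ℝ e₁ p + (8 * X p) • fderiv ℝ X p
        + ∑ i, (2 * Z i p) • fderiv ℝ (Z i) p = 0 := by
    rw [← hV.fderiv]; exact hcrit
  rw [de₁, dX] at hD
  simp only [dZ] at hD
  -- rearrange into a linear combination of σ and the P i
  have key : (-(4 * e₁ p ^ 2) + 16 * X p ^ 2 - ∑ i, 2 * Z i p ^ 2) • σ
      + ∑ i, (8 * e₁ p * Z i p) • P i = 0 := by
    rw [← hD]
    have hs : ∑ i, (2 * Z i p) • ((2 * e₁ p) • P i - Z i p • σ)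
        = (∑ i, (4 * e₁ p * Z i p) • P i) - (∑ i, 2 * Z i p ^ 2) • σ := by
      rw [Finset.sum_smul, ← Finset.sum_sub_distrib]
      refine Finset.sum_congr rfl fun i _ => ?_
      rw [smul_sub, smul_smul, smul_smul]
      congr 1
      · congr 1; ring
      · congr 1; ring
    rw [smul_sub, smul_smul, smul_smul, Finset.smul_sum, hs]
    have h4 : ∀ i, (4 * e₁ p) • (Z i p • P i) = (4 * e₁ p * Z i p) • P i :=
      fun i => by rw [smul_smul]
    simp only [h4]
    have h8 : ∑ i, (8 * e₁ p * Z i p) • P i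
        = ∑ i, (4 * e₁ p * Z i p) • P i + ∑ i, (4 * e₁ p * Z i p) • P i := by
      rw [← Finset.sum_add_distrib]
      refine Finset.sum_congr rfl fun i _ => ?_
      rw [← add_smul]; congr 1; ring
    rw [h8]
    module
  -- apply linear independence
  set c : Fin (n + 1) → ℝ :=
    Fin.cons (-(4 * e₁ p ^ 2) + 16 * X p ^ 2 - ∑ i, 2 * Z i p ^ 2)
      (fun i => 8 * e₁ p * Z i p) with hc
  have hz : ∀ j, c j = 0 := by
    have := Fintype.linearIndependent_iff.mp hindep c ?_
    · exact this
    · rw [Fin.sum_univ_succ]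
      simpa [c] using key
  have hZ0 : ∀ i, Z i p = 0 := by
    intro i
    have := hz i.succ
    simp only [c, Fin.cons_succ] at this
    rcases mul_eq_zero.mp this with h | h
    · rcases mul_eq_zero.mp h with h' | h'
      · norm_num at h'
      · exact absurd h' hne
    · exact h
  have h0 : (-(4 * e₁ p ^ 2) + 16 * X p ^ 2 - ∑ i, 2 * Z i p ^ 2) = 0 := by
    simpa [c] using hz 0
  have hsum0 : ∑ i, Z i p ^ 2 = 0 := by simp [hZ0]
  have hsum2 : ∑ i, 2 * Z i p ^ 2 = 0 := by simp [hZ0]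
  rw [hsum2] at h0
  have hsq : e₁ p ^ 2 = 4 * X p ^ 2 := by linarith
  refine ⟨hZ0, hsq, fun hx => ?_⟩
  rw [hsum0]
  constructor
  · nlinarith
  · nlinarith
end

section
/- Let E be a real normed vector space, p ∈ E, and let σ, P₁, …, Pₙ : E →L[ℝ] ℝ be continuous linear functionals. Let e₁, X, Z₁, …, Zₙ : E → ℝ be differentiable at p with fderiv e₁ p = (Σᵢ Zᵢ(p) • Pᵢ) − e₁(p) • σ, fderiv X p = 2·X(p) • σ, fderiv Zᵢ p = 2·e₁(p) • Pᵢ − Zᵢ(p) • σ. Then the cubic invariant I = (2·e₁² − Σᵢ Zᵢ²)·X has vanishing derivative at p: fderiv I p = 0. -/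
/-- N=4, D=5 supergravity, normal frame: the cubic U-duality invariant
`I = (2e₁² − Σᵢ Zᵢ²)·X` is moduli independent. -/
theorem n4_cubic_invariant {E : Type*} [NormedAddCommGroup E] [NormedSpace ℝ E]
    (p : E) (n : ℕ) (σ : E →L[ℝ] ℝ) (P : Fin n → E →L[ℝ] ℝ)
    (e₁ X : E → ℝ) (Z : Fin n → E → ℝ)
    (he₁ : DifferentiableAt ℝ e₁ p) (hX : DifferentiableAt ℝ X p)
    (hZ : ∀ i, DifferentiableAt ℝ (Z i) p)
    (de₁ : fderiv ℝ e₁ p = (∑ i, Z i p • P i) - e₁ p • σ)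
    (dX : fderiv ℝ X p = (2 * X p) • σ)
    (dZ : ∀ i, fderiv ℝ (Z i) p = (2 * e₁ p) • P i - Z i p • σ) :
    fderiv ℝ (fun x => (2 * e₁ x ^ 2 - ∑ i, Z i x ^ 2) * X x) p = 0 := by
  have hfe : HasFDerivAt e₁ ((∑ i, Z i p • P i) - e₁ p • σ) p := de₁ ▸ he₁.hasFDerivAt
  have hfX : HasFDerivAt X ((2 * X p) • σ) p := dX ▸ hX.hasFDerivAt
  have hfZ : ∀ i, HasFDerivAt (Z i) ((2 * e₁ p) • P i - Z i p • σ) p := fun i =>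
    dZ i ▸ (hZ i).hasFDerivAt
  have hpe : HasFDerivAt (fun x => e₁ x ^ 2)
      ((2 * e₁ p) • ((∑ i, Z i p • P i) - e₁ p • σ)) p := by
    simpa [pow_two, two_mul, add_smul] using hfe.fun_mul hfe
  have hpZ : ∀ i, HasFDerivAt (fun x => Z i x ^ 2)
      ((2 * Z i p) • ((2 * e₁ p) • P i - Z i p • σ)) p := fun i => by
    simpa [pow_two, two_mul, add_smul] using (hfZ i).fun_mul (hfZ i)
  have h1 : HasFDerivAt (fun x => 2 * e₁ x ^ 2 - ∑ i, Z i x ^ 2)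
      ((2:ℝ) • ((2 * e₁ p) • ((∑ i, Z i p • P i) - e₁ p • σ)) -
        ∑ i, (2 * Z i p) • ((2 * e₁ p) • P i - Z i p • σ)) p :=
    (hpe.const_mul 2).sub (HasFDerivAt.fun_sum fun i _ => hpZ i)
  have h2 := h1.fun_mul hfX
  rw [h2.fderiv]
  ext v
  simp only [ContinuousLinearMap.add_apply, ContinuousLinearMap.smul_apply,
    ContinuousLinearMap.sub_apply, ContinuousLinearMap.coe_sum', Finset.sum_apply,
    ContinuousLinearMap.zero_apply, smul_eq_mul, pow_one, nsmul_eq_mul, Nat.cast_ofNat]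
  have hsum : ∑ i, 2 * Z i p * (2 * e₁ p * P i v - Z i p * σ v)
      = 4 * e₁ p * (∑ i, Z i p * P i v) - 2 * (∑ i, Z i p ^ 2) * σ v := by
    simp only [Finset.mul_sum, Finset.sum_mul, ← Finset.sum_sub_distrib]
    exact Finset.sum_congr rfl fun i _ => by ring
  rw [hsum]
  ring
end

section
/- Let E be a real normed vector space, p ∈ E, and let P₁, P₂ : E →L[ℝ] ℝ be continuous linear functionals. Let e₁, e₂, X : E → ℝ be differentiable at p, set e₃ = −e₁ − e₂, and suppose at p: fderiv e₁ p = (1/3)·(−e₁(p) + e₂(p) + 2X(p)) • P₁ + (1/3)·(e₁(p) + 2e₂(p)) • P₂, fderiv e₂ p = (1/3)·(2e₁(p) + e₂(p)) • P₁ + (1/3)·(e₁(p) − e₂(p) + 2X(p)) • P₂, fderiv X p = (1/2)·(2e₁(p) + e₂(p)) • P₁ + (1/2)·(e₁(p) + 2e₂(p)) • P₂. Then the potential V = e₁² + e₂² + (e₁ + e₂)² + (4/3)·X² satisfies fderiv V p = (2/3)·(e₁(p) − e₃(p))·(3e₂(p) + 4X(p)) • P₁ + (2/3)·(e₂(p)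 − e₃(p))·(3e₁(p) + 4X(p)) • P₂. -/
/-- N=6, D=5 supergravity, normal frame: derivative of the black-hole potential
`V = e₁² + e₂² + (e₁+e₂)² + (4/3)X²` in terms of the vielbein functionals. -/
theorem n6_potential_derivative {E : Type*} [NormedAddCommGroup E] [NormedSpace ℝ E]
    (p : E) (P₁ P₂ : E →L[ℝ] ℝ) (e₁ e₂ e₃ X : E → ℝ)
    (he₁ : DifferentiableAt ℝ e₁ p) (he₂ : DifferentiableAt ℝ e₂ p)
    (hX : DifferentiableAt ℝ X p)
    (he₃ : e₃ = fun x => -e₁ x - e₂ x)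
    (de₁ : fderiv ℝ e₁ p
      = ((1 / 3) * (-e₁ p + e₂ p + 2 * X p)) • P₁ + ((1 / 3) * (e₁ p + 2 * e₂ p)) • P₂)
    (de₂ : fderiv ℝ e₂ p
      = ((1 / 3) * (2 * e₁ p + e₂ p)) • P₁ + ((1 / 3) * (e₁ p - e₂ p + 2 * X p)) • P₂)
    (dX : fderiv ℝ X p
      = ((1 / 2) * (2 * e₁ p + e₂ p)) • P₁ + ((1 / 2) * (e₁ p + 2 * e₂ p)) • P₂) :
    fderiv ℝ (fun x => e₁ x ^ 2 + e₂ x ^ 2 + (e₁ x + e₂ x) ^ 2 + (4 / 3) * X x ^ 2) p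
      = ((2 / 3) * (e₁ p - e₃ p) * (3 * e₂ p + 4 * X p)) • P₁
        + ((2 / 3) * (e₂ p - e₃ p) * (3 * e₁ p + 4 * X p)) • P₂ := by
  have h1 := he₁.hasFDerivAt
  have h2 := he₂.hasFDerivAt
  have h3 := hX.hasFDerivAt
  rw [de₁] at h1
  rw [de₂] at h2
  rw [dX] at h3
  have hV := (((h1.mul h1).add (h2.mul h2)).add ((h1.add h2).mul (h1.add h2))).add
    ((h3.mul h3).const_mul (4 / 3 : ℝ))
  rw [show (fun x => e₁ x ^ 2 + e₂ x ^ 2 + (e₁ x + e₂ x) ^ 2 + (4 / 3) * X x ^ 2)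
      = (fun x => e₁ x * e₁ x + e₂ x * e₂ x + (e₁ x + e₂ x) * (e₁ x + e₂ x)
        + (4 / 3) * (X x * X x)) from by funext x; ring, (show fderiv ℝ (fun x => e₁ x * e₁ x + e₂ x * e₂ x
        + (e₁ x + e₂ x) * (e₁ x + e₂ x) + (4 / 3) * (X x * X x)) p = _ from hV.fderiv)]
  ext x
  simp [he₃, ContinuousLinearMap.smul_apply, ContinuousLinearMap.add_apply]
  ring
end

section
/- Let E be a real normed vector space, p ∈ E, and let P₁, P₂ : E →L[ℝ] ℝ be linearly independent continuous linear functionals. Let e₁, e₂, X : E → ℝ be differentiable at p, set e₃ = −e₁ − e₂, and suppose at p: fderiv e₁ p = (1/3)·(−e₁(p) + e₂(p) + 2X(p)) • P₁ + (1/3)·(e₁(p) + 2e₂(p)) • P₂, fderiv e₂ p = (1/3)·(2e₁(p) + e₂(p)) • P₁ + (1/3)·(e₁(p) − e₂(p) + 2X(p)) • P₂, fderiv X p = (1/2)·(2e₁(p) + e₂(p)) • P₁ + (1/2)·(e₁(p) + 2e₂(p)) • P₂. Suppose fderiv V p = 0 for V = e₁² + e₂² + (e₁+e₂)² + (4/3)·X²,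 and that e₁(p) ≠ e₂(p) and e₁(p) ≠ e₃(p). Then e₂(p) = e₃(p) = −(1/2)·e₁(p) = −(4/3)·X(p), and V(p) = (27/16)·e₁(p)² = (4/3)·((9/8)·e₁(p))². -/
set_option maxHeartbeats 1000000 in
/-- N=6, D=5 supergravity, normal frame: at a critical point of the black-hole
potential `V = e₁² + e₂² + (e₁+e₂)² + (4/3)X²` with `e₁ ≠ e₂` and `e₁ ≠ e₃`,
one has `e₂ = e₃ = −(1/2)e₁ = −(4/3)X` and `V = (27/16)e₁² = (4/3)((9/8)e₁)²`. -/
theorem n6_attractor {E : Type*} [NormedAddCommGroup E] [NormedSpace ℝ E]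
    (p : E) (P₁ P₂ : E →L[ℝ] ℝ)
    (hindep : LinearIndependent ℝ ![P₁, P₂])
    (e₁ e₂ e₃ X : E → ℝ)
    (he₁ : DifferentiableAt ℝ e₁ p) (he₂ : DifferentiableAt ℝ e₂ p)
    (hX : DifferentiableAt ℝ X p)
    (he₃ : e₃ = fun x => -e₁ x - e₂ x)
    (de₁ : fderiv ℝ e₁ p
      = ((1 / 3) * (-e₁ p + e₂ p + 2 * X p)) • P₁ + ((1 / 3) * (e₁ p + 2 * e₂ p)) • P₂)
    (de₂ : fderiv ℝ e₂ p
      = ((1 / 3) * (2 * e₁ p + e₂ p)) • P₁ + ((1 / 3) * (e₁ p - e₂ p + 2 * X p)) • P₂)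
    (dX : fderiv ℝ X p
      = ((1 / 2) * (2 * e₁ p + e₂ p)) • P₁ + ((1 / 2) * (e₁ p + 2 * e₂ p)) • P₂)
    (hcrit : fderiv ℝ
      (fun x => e₁ x ^ 2 + e₂ x ^ 2 + (e₁ x + e₂ x) ^ 2 + (4 / 3) * X x ^ 2) p = 0)
    (hne₁₂ : e₁ p ≠ e₂ p) (hne₁₃ : e₁ p ≠ e₃ p) :
    e₂ p = e₃ p ∧ e₃ p = -(1 / 2) * e₁ p ∧ e₃ p = -(4 / 3) * X p ∧
      e₁ p ^ 2 + e₂ p ^ 2 + (e₁ p + e₂ p) ^ 2 + (4 / 3) * X p ^ 2 = (27 / 16) * e₁ p ^ 2 ∧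
      (27 / 16) * e₁ p ^ 2 = (4 / 3) * ((9 / 8) * e₁ p) ^ 2 := by
  have h1 := he₁.hasFDerivAt
  have h2 := he₂.hasFDerivAt
  have h3 := hX.hasFDerivAt
  have hfun : (fun x => e₁ x ^ 2 + e₂ x ^ 2 + (e₁ x + e₂ x) ^ 2 + (4 / 3) * X x ^ 2)
      = fun x => e₁ x * e₁ x + e₂ x * e₂ x + (e₁ x + e₂ x) * (e₁ x + e₂ x)
          + (4 / 3) * (X x * X x) := by
    funext x; ring
  have hV : HasFDerivAt
      (fun x => e₁ x * e₁ x + e₂ x * e₂ x + (e₁ x + e₂ x) * (e₁ x + e₂ x)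
          + (4 / 3) * (X x * X x))
      ((e₁ p • fderiv ℝ e₁ p + e₁ p • fderiv ℝ e₁ p
        + (e₂ p • fderiv ℝ e₂ p + e₂ p • fderiv ℝ e₂ p)
        + ((e₁ p + e₂ p) • (fderiv ℝ e₁ p + fderiv ℝ e₂ p)
          + (e₁ p + e₂ p) • (fderiv ℝ e₁ p + fderiv ℝ e₂ p)))
        + ((4 / 3) : ℝ) • (X p • fderiv ℝ X p + X p • fderiv ℝ X p)) p :=
    (((h1.mul h1).add (h2.mul h2)).add ((h1.add h2).mul (h1.add h2))).add
      ((h3.mul h3).const_mul ((4 / 3) : ℝ))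
  have hD := hV.fderiv
  rw [hfun] at hcrit
  rw [hcrit] at hD
  rw [de₁, de₂, dX] at hD
  set a := e₁ p with ha
  set b := e₂ p with hb
  set c := X p with hc
  clear_value a b c
  have hAB : (4*a*b + 2*b^2 + (16/3)*a*c + (8/3)*b*c) • P₁
      + (2*a^2 + 4*a*b + (8/3)*a*c + (16/3)*b*c) • P₂ = (0 : E →L[ℝ] ℝ) := by
    rw [hD]; module
  obtain ⟨hA, hB⟩ := LinearIndependent.pair_iff.mp hindep _ _ hAB
  have h12 : a - b ≠ 0 := sub_ne_zero.mpr hne₁₂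
  have h13 : 2*a + b ≠ 0 := by
    intro h
    apply hne₁₃
    rw [he₃]
    simp only [← ha, ← hb]
    linarith
  -- from hA - hB : (a-b) * (8/3*c - 2*(a+b)) = 0
  have hcc : (a - b) * ((8/3)*c - 2*(a+b)) = 0 := by linear_combination hA - hB
  have hc4 : (8/3)*c - 2*(a+b) = 0 := by
    rcases mul_eq_zero.mp hcc with h | h
    · exact absurd h h12
    · exact h
  have hfac : (2*a + b) * (2*(a + 2*b)) = 0 := by
    linear_combination hA - (2*a + b) * hc4
  have hab2 : a + 2*b = 0 := by
    rcases mul_eq_zero.mp hfac with h | h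
    · exact absurd h h13
    · linarith
  have hb' : b = -(1/2)*a := by linarith
  have hc' : c = (3/8)*a := by linarith
  have he3p : e₃ p = -a - b := by simp [he₃, ha, hb]
  clear hD hV hcrit hfun h1 h2 h3 hAB hindep de₁ de₂ dX hcc hfac
  refine ⟨?_, ?_, ?_, ?_, ?_⟩
  · rw [he3p]; linarith
  · rw [he3p]; linarith
  · rw [he3p]; rw [hc']; linarith
  · rw [hb', hc']; ring
  · ring
end

section
/- Let E be a real normed vector space, p ∈ E, and let P₁, P₂ : E →L[ℝ] ℝ be continuous linear functionals. Let e₁, e₂, X : E → ℝ be differentiable at p and satisfy at p: fderiv e₁ p = (1/3)·(−e₁(p) + e₂(p) + 2X(p)) • P₁ + (1/3)·(e₁(p) + 2e₂(p)) • P₂, fderiv X p = (1/2)·(2e₁(p) + e₂(p)) • P₁ + (1/2)·(e₁(p) + 2e₂(p)) • P₂. If e₂(p) = −(4/3)·X(p) and e₁(p) = (8/3)·X(p), then the mass function M = e₁ + (1/3)·X has vanishing derivative at p: fderiv (e₁ + (1/3)·X) p = 0, and M(p) = (9/8)·e₁(p). -/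
/-- N=6, D=5 supergravity, normal frame: at the attractor point
(`e₂ = −(4/3)X`, `e₁ = (8/3)X`) the BPS mass `M = e₁ + (1/3)X` is extremized
and `M = (9/8)e₁`. -/
theorem n6_mass_extremized {E : Type*} [NormedAddCommGroup E] [NormedSpace ℝ E]
    (p : E) (P₁ P₂ : E →L[ℝ] ℝ) (e₁ e₂ X : E → ℝ)
    (he₁ : DifferentiableAt ℝ e₁ p) (he₂ : DifferentiableAt ℝ e₂ p)
    (hX : DifferentiableAt ℝ X p)
    (de₁ : fderiv ℝ e₁ p
      = ((1 / 3) * (-e₁ p + e₂ p + 2 * X p)) • P₁ + ((1 / 3) * (e₁ p + 2 * e₂ p)) • P₂)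
    (dX : fderiv ℝ X p
      = ((1 / 2) * (2 * e₁ p + e₂ p)) • P₁ + ((1 / 2) * (e₁ p + 2 * e₂ p)) • P₂)
    (hfix₂ : e₂ p = -(4 / 3) * X p) (hfix₁ : e₁ p = (8 / 3) * X p) :
    fderiv ℝ (fun x => e₁ x + (1 / 3) * X x) p = 0 ∧
      e₁ p + (1 / 3) * X p = (9 / 8) * e₁ p := by
  constructor
  · have H : HasFDerivAt (fun x => e₁ x + (1 / 3) * X x)
        (fderiv ℝ e₁ p + (1 / 3 : ℝ) • fderiv ℝ X p) p :=
      he₁.hasFDerivAt.add (hX.hasFDerivAt.const_smul (1 / 3 : ℝ))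
    rw [H.fderiv, de₁, dX, hfix₂, hfix₁, smul_add, smul_smul, smul_smul]
    ext v
    simp only [ContinuousLinearMap.add_apply, ContinuousLinearMap.coe_smul',
      Pi.smul_apply, ContinuousLinearMap.zero_apply, smul_eq_mul]
    ring
  · rw [hfix₁]; ring
end

section
/- Let E be a real normed vector space, p ∈ E, and let P₁, P₂ : E →L[ℝ] ℝ be continuous linear functionals. Let e₁, e₂, X : E → ℝ be differentiable at p and satisfy at p: fderiv e₁ p = (1/3)·(−e₁(p) + e₂(p) + 2X(p)) • P₁ + (1/3)·(e₁(p) + 2e₂(p)) • P₂, fderiv e₂ p = (1/3)·(2e₁(p) + e₂(p)) • P₁ + (1/3)·(e₁(p) − e₂(p) + 2X(p)) • P₂, fderiv X p = (1/2)·(2e₁(p) + e₂(p)) • P₁ + (1/2)·(e₁(p) + 2e₂(p)) • P₂. Then the cubic invariant I = e₁²·e₂ + e₁·e₂² − (2/3)·(e₁² + e₂² + e₁·e₂)·X + (8/27)·X³ has vanishing derivative at p: fderiv I p = 0. -/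
/-- N=6, D=5 supergravity, normal frame: the cubic U-duality invariant
`I = e₁²e₂ + e₁e₂² − (2/3)(e₁² + e₂² + e₁e₂)X + (8/27)X³` is moduli independent. -/
theorem n6_cubic_invariant {E : Type*} [NormedAddCommGroup E] [NormedSpace ℝ E]
    (p : E) (P₁ P₂ : E →L[ℝ] ℝ) (e₁ e₂ X : E → ℝ)
    (he₁ : DifferentiableAt ℝ e₁ p) (he₂ : DifferentiableAt ℝ e₂ p)
    (hX : DifferentiableAt ℝ X p)
    (de₁ : fderiv ℝ e₁ p
      = ((1 / 3) * (-e₁ p + e₂ p + 2 * X p)) • P₁ + ((1 / 3) * (e₁ p + 2 * e₂ p)) • P₂)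
    (de₂ : fderiv ℝ e₂ p
      = ((1 / 3) * (2 * e₁ p + e₂ p)) • P₁ + ((1 / 3) * (e₁ p - e₂ p + 2 * X p)) • P₂)
    (dX : fderiv ℝ X p
      = ((1 / 2) * (2 * e₁ p + e₂ p)) • P₁ + ((1 / 2) * (e₁ p + 2 * e₂ p)) • P₂) :
    fderiv ℝ (fun x => e₁ x ^ 2 * e₂ x + e₁ x * e₂ x ^ 2
      - (2 / 3) * (e₁ x ^ 2 + e₂ x ^ 2 + e₁ x * e₂ x) * X x
      + (8 / 27) * X x ^ 3) p = 0 := by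
  have h1 := he₁.hasFDerivAt
  have h2 := he₂.hasFDerivAt
  have h3 := hX.hasFDerivAt
  have hfun : (fun x => e₁ x ^ 2 * e₂ x + e₁ x * e₂ x ^ 2
      - (2 / 3) * (e₁ x ^ 2 + e₂ x ^ 2 + e₁ x * e₂ x) * X x
      + (8 / 27) * X x ^ 3)
      = (fun x => e₁ x * e₁ x * e₂ x + e₁ x * (e₂ x * e₂ x)
      - (2 / 3) * ((e₁ x * e₁ x + e₂ x * e₂ x + e₁ x * e₂ x) * X x)
      + (8 / 27) * (X x * X x * X x)) := by
    funext x; ring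
  have H := ((((h1.mul h1).mul h2).add (h1.mul (h2.mul h2))).sub
      (((((h1.mul h1).add (h2.mul h2)).add (h1.mul h2)).mul h3).const_mul (2/3))).add
      (((h3.mul h3).mul h3).const_mul (8/27))
  rw [hfun]; refine H.fderiv.trans ?_
  rw [de₁, de₂, dX]
  ext v
  simp only [ContinuousLinearMap.add_apply, ContinuousLinearMap.sub_apply,
    ContinuousLinearMap.smul_apply, ContinuousLinearMap.zero_apply, smul_eq_mul, Pi.mul_apply, Pi.add_apply]
  ring
end

section
/- Let E be a real normed vector space, p ∈ E, and let P₁, P₂ : E →L[ℝ] ℝ be continuous linear functionals. Let e₁, e₂, e₃ : E → ℝ be differentiable at p, set e₄ = −e₁ − e₂ − e₃, and suppose at p: fderiv e₁ p = (e₁ + 2e₂ + e₃)(p) • P₁ + (e₁ + e₂ + 2e₃)(p) • P₂, fderiv e₂ p = (e₁ − e₃)(p) • P₁ + (−e₁ − e₂ − 2e₃)(p) • P₂, fderiv e₃ p = (−e₁ − 2e₂ − e₃)(p) • P₁ + (e₁ − e₂)(p) • P₂. Then the potential V = e₁² + e₂² + e₃² + (e₁ + e₂ + e₃)² satisfies fderiv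 V p = 4·(e₁(p) − e₃(p))·(e₂(p) − e₄(p)) • P₁ + 4·(e₁(p) − e₂(p))·(e₃(p) − e₄(p)) • P₂. -/
/-- N=8, D=5 supergravity, normal frame: derivative of the black-hole potential
`V = e₁² + e₂² + e₃² + (e₁+e₂+e₃)²` in terms of the vielbein functionals. -/
theorem n8_potential_derivative {E : Type*} [NormedAddCommGroup E] [NormedSpace ℝ E]
    (p : E) (P₁ P₂ : E →L[ℝ] ℝ) (e₁ e₂ e₃ e₄ : E → ℝ)
    (he₁ : DifferentiableAt ℝ e₁ p) (he₂ : DifferentiableAt ℝ e₂ p)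
    (he₃ : DifferentiableAt ℝ e₃ p)
    (he₄ : e₄ = fun x => -e₁ x - e₂ x - e₃ x)
    (de₁ : fderiv ℝ e₁ p
      = (e₁ p + 2 * e₂ p + e₃ p) • P₁ + (e₁ p + e₂ p + 2 * e₃ p) • P₂)
    (de₂ : fderiv ℝ e₂ p
      = (e₁ p - e₃ p) • P₁ + (-e₁ p - e₂ p - 2 * e₃ p) • P₂)
    (de₃ : fderiv ℝ e₃ p
      = (-e₁ p - 2 * e₂ p - e₃ p) • P₁ + (e₁ p - e₂ p) • P₂) :
    fderiv ℝ (fun x => e₁ x ^ 2 + e₂ x ^ 2 + e₃ x ^ 2 + (e₁ x + e₂ x + e₃ x) ^ 2) p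
      = (4 * (e₁ p - e₃ p) * (e₂ p - e₄ p)) • P₁
        + (4 * (e₁ p - e₂ p) * (e₃ p - e₄ p)) • P₂ := by
  have h1 := he₁.hasFDerivAt
  have h2 := he₂.hasFDerivAt
  have h3 := he₃.hasFDerivAt
  have hs : (fun x => e₁ x ^ 2 + e₂ x ^ 2 + e₃ x ^ 2 + (e₁ x + e₂ x + e₃ x) ^ 2)
      = fun x => e₁ x * e₁ x + e₂ x * e₂ x + e₃ x * e₃ x
        + (e₁ x + e₂ x + e₃ x) * (e₁ x + e₂ x + e₃ x) := by
    funext x; ring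
  have H : HasFDerivAt (fun x => e₁ x * e₁ x + e₂ x * e₂ x + e₃ x * e₃ x
      + (e₁ x + e₂ x + e₃ x) * (e₁ x + e₂ x + e₃ x)) _ p := (((h1.mul h1).add (h2.mul h2)).add (h3.mul h3)).add
    (((h1.add h2).add h3).mul ((h1.add h2).add h3))
  rw [hs, H.fderiv, de₁, de₂, de₃, he₄]
  ext x
  simp only [ContinuousLinearMap.add_apply, ContinuousLinearMap.smul_apply, smul_eq_mul, Pi.add_apply]
  ring
end

section
/- Let E be a real normed vector space, p ∈ E, and let P₁, P₂ : E →L[ℝ] ℝ be continuous linear functionals. Let e₁, e₂, e₃ : E → ℝ be differentiable at p, set e₄ = −e₁ − e₂ − e₃, and suppose at p: fderiv e₁ p = (e₁ + 2e₂ + e₃)(p) • P₁ + (e₁ + e₂ + 2e₃)(p) • P₂, fderiv e₂ p = (e₁ − e₃)(p) • P₁ + (−e₁ − e₂ − 2e₃)(p) • P₂, fderiv e₃ p = (−e₁ − 2e₂ − e₃)(p) • P₁ + (e₁ − e₂)(p) • P₂. Then the cubic invariant I = e₁³ + e₂³ + e₃³ + e₄³ has vanishing derivative at p: fderiv I p =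 0. -/
/-- N=8, D=5 supergravity, normal frame: the cubic U-duality invariant
`I = e₁³ + e₂³ + e₃³ + e₄³` (with `e₄ = −e₁−e₂−e₃`) is moduli independent. -/
theorem n8_cubic_invariant {E : Type*} [NormedAddCommGroup E] [NormedSpace ℝ E]
    (p : E) (P₁ P₂ : E →L[ℝ] ℝ) (e₁ e₂ e₃ e₄ : E → ℝ)
    (he₁ : DifferentiableAt ℝ e₁ p) (he₂ : DifferentiableAt ℝ e₂ p)
    (he₃ : DifferentiableAt ℝ e₃ p)
    (he₄ : e₄ = fun x => -e₁ x - e₂ x - e₃ x)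
    (de₁ : fderiv ℝ e₁ p
      = (e₁ p + 2 * e₂ p + e₃ p) • P₁ + (e₁ p + e₂ p + 2 * e₃ p) • P₂)
    (de₂ : fderiv ℝ e₂ p
      = (e₁ p - e₃ p) • P₁ + (-e₁ p - e₂ p - 2 * e₃ p) • P₂)
    (de₃ : fderiv ℝ e₃ p
      = (-e₁ p - 2 * e₂ p - e₃ p) • P₁ + (e₁ p - e₂ p) • P₂) :
    fderiv ℝ (fun x => e₁ x ^ 3 + e₂ x ^ 3 + e₃ x ^ 3 + e₄ x ^ 3) p = 0 := by
  subst he₄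
  have h1 := he₁.hasFDerivAt
  have h2 := he₂.hasFDerivAt
  have h3 := he₃.hasFDerivAt
  have h4 : HasFDerivAt (fun x => -e₁ x - e₂ x - e₃ x)
      (-fderiv ℝ e₁ p - fderiv ℝ e₂ p - fderiv ℝ e₃ p) p :=
    ((h1.neg.sub h2).sub h3)
  have H : HasFDerivAt (fun x => e₁ x ^ 3 + e₂ x ^ 3 + e₃ x ^ 3 + (-e₁ x - e₂ x - e₃ x) ^ 3)
      (((3 : ℕ) * e₁ p ^ 2) • fderiv ℝ e₁ p + ((3 : ℕ) * e₂ p ^ 2) • fderiv ℝ e₂ p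
        + ((3 : ℕ) * e₃ p ^ 2) • fderiv ℝ e₃ p
        + ((3 : ℕ) * (-e₁ p - e₂ p - e₃ p) ^ 2) •
            (-fderiv ℝ e₁ p - fderiv ℝ e₂ p - fderiv ℝ e₃ p)) p := by
    have hX := ((((hasDerivAt_pow 3 (e₁ p)).comp_hasFDerivAt p h1).add ((hasDerivAt_pow 3 (e₂ p)).comp_hasFDerivAt p h2)).add ((hasDerivAt_pow 3 (e₃ p)).comp_hasFDerivAt p h3)).add ((hasDerivAt_pow 3 (-e₁ p - e₂ p - e₃ p)).comp_hasFDerivAt p h4)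
    simp at hX
    simp
    exact hX
  rw [H.fderiv, de₁, de₂, de₃]
  push_cast
  module
end
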